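/- Conversely, if there exists an integer n ≥ 1 such that Θ^n = ρ^n Θ' for some topologically nilpotent Θ' ∈ M_r(A), then ρ^{n−1}V ⊆ V_{Θ/ρ}: for every v ∈ V and every m ≥ 0, Θ^m(ρ^{n−1}v) ∈ ρ^m V, and ρ^{−m}Θ^m(ρ^{n−1}v) → 0 as m → ∞. -/

import Mathlib

open Filter Topology

/-- If `Θ ∈ M_r(A)` is topologically nilpotent and there is `n ≥ 1` with
`Θ^n = ρ^n Θ'` for some topologically nilpotent `Θ'`, then `ρ^{n−1} V ⊆ V_{Θ/ρ}`: for every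
`v ∈ V = A^r` and every `m ≥ 0`, `Θ^m(ρ^{n−1}v) ∈ ρ^m V`, with witnesses tending to `0`
as `m → ∞`. -/
theorem stmt_12 (p : ℕ) [Fact (Nat.Prime p)] (r : ℕ)
    (A : Type*) [CommRing A] [UniformSpace A] [IsUniformAddGroup A]
    [IsTopologicalRing A] [CompleteSpace A] [T2Space A]
    [Algebra ℤ_[p] A]
    (hadic : IsAdic (Ideal.span {(p : A)}))
    (htor : ∀ x : A, (p : A) * x = 0 → x = 0)
    (ρ : A) (hρsmall : ∃ c : A, ρ ^ (p - 1) = (p : A) * c)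
    (hρreg : ∀ x : A, ρ * x = 0 → x = 0)
    (Θ : Matrix (Fin r) (Fin r) A)
    (hΘ : ∀ i j, Tendsto (fun k : ℕ => (Θ ^ k) i j) atTop (𝓝 0))
    (n : ℕ) (hn : 1 ≤ n)
    (Θ' : Matrix (Fin r) (Fin r) A)
    (hΘ' : ∀ i j, Tendsto (fun k : ℕ => (Θ' ^ k) i j) atTop (𝓝 0))
    (hΘn : Θ ^ n = ρ ^ n • Θ') :
    ∀ v : Fin r → A,
      ∃ w : ℕ → Fin r → A,
        (∀ m : ℕ, ρ ^ m • w m = (Θ ^ m).mulVec (ρ ^ (n - 1) • v)) ∧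
        Tendsto w atTop (𝓝 0) := by
  intro v
  set J : Ideal A := Ideal.span {(p : A)} with hJ
  obtain ⟨hopen, hbasis⟩ := isAdic_iff.mp hadic
  refine ⟨fun m => ρ ^ (n - 1 - m % n) • (Θ' ^ (m / n) * Θ ^ (m % n)).mulVec v, ?_, ?_⟩
  · intro m
    have hl : m % n ≤ n - 1 := by
      have := Nat.mod_lt m (show 0 < n by omega); omega
    have hΘm : Θ ^ m = ρ ^ (n * (m / n)) • (Θ' ^ (m / n) * Θ ^ (m % n)) := by
      conv_lhs => rw [← Nat.div_add_mod m n]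
      rw [pow_add, pow_mul, hΘn, smul_pow, ← pow_mul, Matrix.smul_mul]
    rw [hΘm, Matrix.smul_mulVec, Matrix.mulVec_smul, smul_smul, smul_smul,
        ← pow_add, ← pow_add]
    congr 2
    have hdm := Nat.div_add_mod m n
    generalize n * (m / n) = k at hdm ⊢
    omega
  · rw [tendsto_pi_nhds]
    intro i
    rw [tendsto_def]
    intro U hU
    obtain ⟨s, hs⟩ := hbasis U hU
    have hmem : ((J ^ s : Ideal A) : Set A) ∈ 𝓝 (0 : A) :=
      (hopen s).mem_nhds (by simpa using (J ^ s).zero_mem)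
    have h1 : ∀ᶠ d in atTop, ∀ j k, (Θ' ^ d) j k ∈ (J ^ s : Ideal A) := by
      rw [eventually_all]
      intro j
      rw [eventually_all]
      intro k
      exact hΘ' j k hmem
    obtain ⟨D, hD⟩ := eventually_atTop.mp h1
    filter_upwards [eventually_ge_atTop (n * D)] with m hm
    have hd : D ≤ m / n := (Nat.le_div_iff_mul_le (by omega)).mpr (by rw [Nat.mul_comm]; exact hm)
    have hM : ∀ j, (Θ' ^ (m / n) * Θ ^ (m % n)) i j ∈ (J ^ s : Ideal A) := by
      intro j
      rw [Matrix.mul_apply]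
      exact Ideal.sum_mem _ fun k _ => Ideal.mul_mem_right _ _ (hD _ hd i k)
    apply hs
    show (ρ ^ (n - 1 - m % n) • (Θ' ^ (m / n) * Θ ^ (m % n)).mulVec v) i
        ∈ (J ^ s : Ideal A)
    simp only [Pi.smul_apply, smul_eq_mul, Matrix.mulVec, dotProduct]
    exact Ideal.mul_mem_left _ _
      (Ideal.sum_mem _ fun j _ => Ideal.mul_mem_right _ _ (hM j))
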